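/- Let ν₁ and ν₂ be probability measures on (0,∞) with equal finite first moments. If their size-bias ratio functions coincide, r_{ν₁} = r_{ν₂} on [0,1], then ν₁ = ν₂. -/

import Mathlib

open MeasureTheory Real

open Set Filter Topology
open scoped ENNReal
set_option linter.unusedSectionVars false
set_option linter.unusedVariables false

/-- The extended survival function of a measure `ρ` on `ℝ`:
`S_ρ(y, q) = ρ((y, ∞)) + (1 - q) ρ({y})`, viewed as a function on `ℝ × [0,1]`
(with the lexicographic order). -/
noncomputable def extSurv (ρ : Measure ℝ) (y q : ℝ) : ℝ :=
  (ρ (Set.Ioi y)).toReal + (1 - q) * (ρ {y}).toReal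

/-- First coordinate of the lexicographic supremum `Ŝ⁻¹(x) = sup {(y,q) : S_ρ(y,q) = x}`. -/
noncomputable def invFst (ρ : Measure ℝ) (x : ℝ) : ℝ :=
  sSup {y : ℝ | ∃ q ∈ Set.Icc (0 : ℝ) 1, extSurv ρ y q = x}

/-- Second coordinate of the lexicographic supremum `Ŝ⁻¹(x)`. -/
noncomputable def invSnd (ρ : Measure ℝ) (x : ℝ) : ℝ :=
  sSup {q ∈ Set.Icc (0 : ℝ) 1 | extSurv ρ (invFst ρ x) q = x}

/-- The size-biased version of `ν`, when `ν` has mean `m`: `dν̂/dν(y) = y / m`. -/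
noncomputable def sizeBiased (ν : Measure ℝ) (m : ℝ) : Measure ℝ :=
  ν.withDensity fun y => ENNReal.ofReal (y / m)

/-- The size-bias ratio function `r_ν(x) = S_ν(Ŝ_ν⁻¹(x))`, where `S_ν` is the extended
survival function of `ν` and `Ŝ_ν` that of its size-biased version. -/
noncomputable def sbRatio (ν : Measure ℝ) (m : ℝ) (x : ℝ) : ℝ :=
  extSurv ν (invFst (sizeBiased ν m) x) (invSnd (sizeBiased ν m) x)

namespace SBR

/-- the achiever set -/
def Ach (ρ : Measure ℝ) (x : ℝ) : Set ℝ := {y : ℝ | ∃ q ∈ Set.Icc (0 : ℝ) 1, extSurv ρ y q = x}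

lemma invFst_eq (ρ : Measure ℝ) (x : ℝ) : invFst ρ x = sSup (Ach ρ x) := rfl

variable {ρ : Measure ℝ} [IsProbabilityMeasure ρ] {x y q t : ℝ}

lemma Ici_toReal (ρ : Measure ℝ) [IsFiniteMeasure ρ] (y : ℝ) :
    (ρ (Ici y)).toReal = (ρ (Ioi y)).toReal + (ρ {y}).toReal := by
  rw [← ENNReal.toReal_add (measure_ne_top _ _) (measure_ne_top _ _)]
  congr 1
  rw [← Set.Ioi_union_left, measure_union _ (measurableSet_singleton y)]
  · simp [Set.disjoint_left]
    exact fun a ha => ne_of_gt ha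

lemma extSurv_nonneg (hq : q ≤ 1) : 0 ≤ extSurv ρ y q :=
  add_nonneg ENNReal.toReal_nonneg (mul_nonneg (by linarith) ENNReal.toReal_nonneg)

lemma Ioi_le_extSurv (hq : q ≤ 1) : (ρ (Ioi y)).toReal ≤ extSurv ρ y q :=
  le_add_of_nonneg_right (mul_nonneg (by linarith) ENNReal.toReal_nonneg)

lemma extSurv_le_Ici (hq : 0 ≤ q) : extSurv ρ y q ≤ (ρ (Ici y)).toReal := by
  rw [Ici_toReal]
  unfold extSurv
  have h0 : (0:ℝ) ≤ (ρ {y}).toReal := ENNReal.toReal_nonneg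
  nlinarith

lemma toReal_le_one (s : Set ℝ) : (ρ s).toReal ≤ 1 := by
  have := prob_le_one (μ := ρ) (s := s)
  simpa using ENNReal.toReal_mono (by simp) this

/-- achievers give a lower bound for `ρ (Ici y)` -/
lemma mem_Ach_le (hy : y ∈ Ach ρ x) : ENNReal.ofReal x ≤ ρ (Ici y) := by
  obtain ⟨q, hq, hqe⟩ := hy
  refine ENNReal.ofReal_le_of_le_toReal ?_
  rw [← hqe]; exact extSurv_le_Ici hq.1

lemma mem_Ach_ge (hy : y ∈ Ach ρ x) : ρ (Ioi y) ≤ ENNReal.ofReal x := by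
  obtain ⟨q, hq, hqe⟩ := hy
  rw [ENNReal.le_ofReal_iff_toReal_le (measure_ne_top _ _)
    (le_trans (extSurv_nonneg hq.2) hqe.le)]
  rw [← hqe]; exact Ioi_le_extSurv hq.2

lemma exists_tail_small {c : ℝ≥0∞} (hc : 0 < c) : ∃ n : ℕ, ρ (Ici (n : ℝ)) < c := by
  have h1 : Tendsto (fun n : ℕ => ρ (Ici (n : ℝ))) atTop (𝓝 (ρ (⋂ n : ℕ, Ici (n : ℝ)))) := by
    have := tendsto_measure_iInter_atTop (μ := ρ) (s := fun n : ℕ => Ici (n : ℝ))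
      (fun n => (measurableSet_Ici).nullMeasurableSet)
      (fun a b hab => Ici_subset_Ici.2 (by exact_mod_cast hab)) ⟨0, measure_ne_top _ _⟩
    exact this
  have h2 : (⋂ n : ℕ, Ici (n : ℝ)) = ∅ := by
    ext t; simp only [mem_iInter, mem_Ici, mem_empty_iff_false, iff_false, not_forall, not_le]
    obtain ⟨n, hn⟩ := exists_nat_gt t; exact ⟨n, hn⟩
  rw [h2, measure_empty] at h1
  exact (h1.eventually (gt_mem_nhds hc)).exists
lemma measure_Ici_ge_of_forall_lt {b : ℝ} {c : ℝ≥0∞} (h : ∀ y < b, c ≤ ρ (Ioi y)) :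
    c ≤ ρ (Ici b) := by
  have h1 : Tendsto (fun n : ℕ => ρ (Ioi (b - ((n : ℝ) + 1)⁻¹))) atTop
      (𝓝 (ρ (⋂ n : ℕ, Ioi (b - ((n : ℝ) + 1)⁻¹)))) := by
    refine tendsto_measure_iInter_atTop (fun n => measurableSet_Ioi.nullMeasurableSet)
      (fun i j hij => Ioi_subset_Ioi ?_) ⟨0, measure_ne_top _ _⟩
    have : ((j : ℝ) + 1)⁻¹ ≤ ((i : ℝ) + 1)⁻¹ := by
      apply inv_anti₀ <;> [positivity; exact_mod_cast by linarith [hij]]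
    linarith
  have h2 : (⋂ n : ℕ, Ioi (b - ((n : ℝ) + 1)⁻¹)) = Ici b := by
    ext t
    simp only [mem_iInter, mem_Ioi, mem_Ici]
    constructor
    · intro ht
      by_contra hlt
      push_neg at hlt
      obtain ⟨n, hn⟩ := exists_nat_one_div_lt (show (0:ℝ) < b - t by linarith)
      have := ht n
      rw [one_div] at hn
      linarith
    · intro ht n
      have : (0:ℝ) < ((n : ℝ) + 1)⁻¹ := by positivity
      linarith
  rw [h2] at h1
  refine ge_of_tendsto h1 (Eventually.of_forall fun n => ?_)
  have h0 : (0:ℝ) < ((n : ℝ) + 1)⁻¹ := by positivity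
  exact h _ (by linarith)

lemma measure_Ioi_le_of_forall_gt {b : ℝ} {c : ℝ≥0∞} (h : ∀ y, b < y → ρ (Ici y) ≤ c) :
    ρ (Ioi b) ≤ c := by
  have h1 : Tendsto (fun n : ℕ => ρ (Ici (b + ((n : ℝ) + 1)⁻¹))) atTop
      (𝓝 (ρ (⋃ n : ℕ, Ici (b + ((n : ℝ) + 1)⁻¹)))) := by
    refine tendsto_measure_iUnion_atTop (fun i j hij => Ici_subset_Ici.2 ?_)
    have : ((j : ℝ) + 1)⁻¹ ≤ ((i : ℝ) + 1)⁻¹ := by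
      apply inv_anti₀ <;> [positivity; exact_mod_cast by linarith [hij]]
    linarith
  have h2 : (⋃ n : ℕ, Ici (b + ((n : ℝ) + 1)⁻¹)) = Ioi b := by
    ext t
    simp only [mem_iUnion, mem_Ici, mem_Ioi]
    constructor
    · rintro ⟨n, hn⟩
      have : (0:ℝ) < ((n : ℝ) + 1)⁻¹ := by positivity
      linarith
    · intro ht
      obtain ⟨n, hn⟩ := exists_nat_one_div_lt (show (0:ℝ) < t - b by linarith)
      rw [one_div] at hn
      exact ⟨n, by linarith⟩
  rw [h2] at h1
  refine le_of_tendsto h1 (Eventually.of_forall fun n => ?_)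
  have h0 : (0:ℝ) < ((n : ℝ) + 1)⁻¹ := by positivity
  exact h _ (by linarith)

/-- solving for the interpolation parameter -/
lemma exists_q (h1 : (ρ (Ioi y)).toReal ≤ x) (h2 : x ≤ (ρ (Ici y)).toReal) :
    ∃ q ∈ Set.Icc (0:ℝ) 1, extSurv ρ y q = x := by
  set T := (ρ (Ioi y)).toReal with hT
  set a := (ρ {y}).toReal with ha
  have ha0 : 0 ≤ a := ENNReal.toReal_nonneg
  have h2' : x ≤ T + a := by rwa [Ici_toReal] at h2
  rcases eq_or_lt_of_le ha0 with hz | hpos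
  · exact ⟨1, ⟨zero_le_one, le_refl 1⟩, by
      simp only [extSurv, ← hT, ← ha, sub_self, zero_mul, add_zero]
      linarith⟩
  · refine ⟨1 - (x - T) / a, ⟨?_, ?_⟩, ?_⟩
    · have : (x - T) / a ≤ 1 := by
        rw [div_le_one hpos]; linarith
      linarith
    · have : 0 ≤ (x - T) / a := div_nonneg (by linarith) ha0
      linarith
    · simp only [extSurv, ← hT, ← ha, sub_sub_cancel]
      field_simp
      ring

lemma bddAbove_Ach (hx : 0 < x) : BddAbove (Ach ρ x) := by
  obtain ⟨n, hn⟩ := exists_tail_small (ρ := ρ) (c := ENNReal.ofReal x) (by simpa using hx)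
  refine ⟨(n : ℝ), fun y hy => ?_⟩
  by_contra hlt
  push_neg at hlt
  have := mem_Ach_le hy
  have h2 : ρ (Ici y) ≤ ρ (Ici (n:ℝ)) := measure_mono (Ici_subset_Ici.2 hlt.le)
  exact (not_le.2 hn) (this.trans h2)

lemma Ioi_zero_eq_one (hpos : ρ (Iic 0) = 0) : ρ (Ioi 0) = 1 := by
  rw [← compl_Iic, measure_compl measurableSet_Iic (measure_ne_top _ _), hpos, measure_univ,
    tsub_zero]

lemma mem_Ach_pos (hpos : ρ (Iic 0) = 0) (hx1 : x < 1) (hy : y ∈ Ach ρ x) : 0 < y := by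
  by_contra hle
  push_neg at hle
  obtain ⟨q, hq, hqe⟩ := hy
  have h1 : (1:ℝ≥0∞) ≤ ρ (Ioi y) := by
    rw [← Ioi_zero_eq_one hpos]
    exact measure_mono (Ioi_subset_Ioi hle)
  have h2 : (1:ℝ) ≤ (ρ (Ioi y)).toReal := by
    rw [show (1:ℝ) = (1:ℝ≥0∞).toReal by simp]
    exact ENNReal.toReal_mono (measure_ne_top _ _) h1
  have := Ioi_le_extSurv (ρ := ρ) (y := y) hq.2
  linarith [hqe ▸ this]

/-- the b-point: an achiever with small tail -/
lemma exists_bpoint (hpos : ρ (Iic 0) = 0) (hx0 : 0 < x) (hx1 : x < 1) :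
    ∃ b, 0 < b ∧ b ∈ Ach ρ x ∧ ρ (Ioi b) ≤ ENNReal.ofReal x := by
  classical
  set B : Set ℝ := {y : ℝ | ENNReal.ofReal x ≤ ρ (Ici y)} with hB
  have hBmem : ∀ y, y ∈ B ↔ ENNReal.ofReal x ≤ ρ (Ici y) := fun y => Iff.rfl
  have hB0 : (0:ℝ) ∈ B := by
    rw [hBmem]
    calc ENNReal.ofReal x ≤ 1 := ENNReal.ofReal_le_one.2 hx1.le
    _ = ρ (Ioi 0) := (Ioi_zero_eq_one hpos).symm
    _ ≤ ρ (Ici 0) := measure_mono Ioi_subset_Ici_self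
  have hBbdd : BddAbove B := by
    obtain ⟨n, hn⟩ := exists_tail_small (ρ := ρ) (c := ENNReal.ofReal x) (by simpa using hx0)
    refine ⟨(n : ℝ), fun y hy => ?_⟩
    by_contra hlt
    push_neg at hlt
    exact (not_le.2 hn) (((hBmem y).1 hy).trans (measure_mono (Ici_subset_Ici.2 hlt.le)))
  have hBposmem : ∃ y ∈ B, 0 < y := by
    by_contra hno
    push_neg at hno
    have : ρ (Ioi 0) ≤ ENNReal.ofReal x := by
      refine measure_Ioi_le_of_forall_gt fun y hy => ?_
      by_contra hgt
      push_neg at hgt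
      exact absurd hy (by simpa using (hno y ((hBmem y).2 hgt.le)))
    rw [Ioi_zero_eq_one hpos] at this
    exact absurd (lt_of_le_of_lt this (ENNReal.ofReal_lt_one.2 hx1)) (lt_irrefl _)
  obtain ⟨y₀, hy₀B, hy₀pos⟩ := hBposmem
  set b := sSup B with hb
  have hbpos : 0 < b := lt_of_lt_of_le hy₀pos (le_csSup hBbdd hy₀B)
  have hup : ENNReal.ofReal x ≤ ρ (Ici b) := by
    refine measure_Ici_ge_of_forall_lt fun y hy => ?_
    obtain ⟨w, hwB, hw⟩ := exists_lt_of_lt_csSup ⟨0, hB0⟩ (by linarith : y < sSup B)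
    exact ((hBmem w).1 hwB).trans (measure_mono (Ici_subset_Ioi.2 hw))
  have hdown : ρ (Ioi b) ≤ ENNReal.ofReal x := by
    refine measure_Ioi_le_of_forall_gt fun y hy => ?_
    by_contra hgt
    push_neg at hgt
    have : y ∈ B := (hBmem y).2 hgt.le
    exact absurd (le_csSup hBbdd this) (by linarith)
  refine ⟨b, hbpos, ?_, hdown⟩
  exact exists_q (ENNReal.toReal_le_of_le_ofReal hx0.le hdown)
    (by rwa [← ENNReal.ofReal_le_iff_le_toReal (measure_ne_top _ _)])
lemma Ach_nonempty (hpos : ρ (Iic 0) = 0) (hx0 : 0 < x) (hx1 : x < 1) :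
    (Ach ρ x).Nonempty := by
  obtain ⟨b, _, hb, _⟩ := exists_bpoint hpos hx0 hx1
  exact ⟨b, hb⟩

/-- the lexicographic supremum is attained -/
lemma attain (hpos : ρ (Iic 0) = 0) (hx0 : 0 < x) (hx1 : x < 1) :
    0 < invFst ρ x ∧ invSnd ρ x ∈ Set.Icc (0:ℝ) 1 ∧
      extSurv ρ (invFst ρ x) (invSnd ρ x) = x := by
  obtain ⟨b, hbpos, hbmem, hbtail⟩ := exists_bpoint hpos hx0 hx1
  have hne : (Ach ρ x).Nonempty := ⟨b, hbmem⟩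
  have hbdd := bddAbove_Ach (ρ := ρ) hx0
  set Y := invFst ρ x with hY
  have hbY : b ≤ Y := le_csSup hbdd hbmem
  have hYpos : 0 < Y := lt_of_lt_of_le hbpos hbY
  -- upper bound: ofReal x ≤ ρ (Ici Y)
  have hup : ENNReal.ofReal x ≤ ρ (Ici Y) := by
    refine measure_Ici_ge_of_forall_lt fun z hz => ?_
    obtain ⟨w, hwmem, hw⟩ := exists_lt_of_lt_csSup hne hz
    exact (mem_Ach_le hwmem).trans (measure_mono (Ici_subset_Ioi.2 hw))
  -- lower bound: ρ (Ioi Y) ≤ ofReal x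
  have hdown : ρ (Ioi Y) ≤ ENNReal.ofReal x :=
    (measure_mono (Ioi_subset_Ioi hbY)).trans (mem_Ach_ge hbmem)
  have hYmem : ∃ q ∈ Set.Icc (0:ℝ) 1, extSurv ρ Y q = x :=
    exists_q (ENNReal.toReal_le_of_le_ofReal hx0.le hdown)
      (by rwa [← ENNReal.ofReal_le_iff_le_toReal (measure_ne_top _ _)])
  refine ⟨hYpos, ?_⟩
  -- now the q part
  set Q : Set ℝ := {q ∈ Set.Icc (0:ℝ) 1 | extSurv ρ Y q = x} with hQ
  have hQne : Q.Nonempty := by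
    obtain ⟨q, hq1, hq2⟩ := hYmem
    exact ⟨q, hq1, hq2⟩
  have hQbdd : BddAbove Q := ⟨1, fun q hq => hq.1.2⟩
  have hQclosed : IsClosed Q := by
    have : Q = Set.Icc (0:ℝ) 1 ∩ (fun q : ℝ => extSurv ρ Y q) ⁻¹' {x} := by
      ext q; simp [hQ, Set.mem_sep_iff, Set.mem_preimage]
    rw [this]
    refine isClosed_Icc.inter (IsClosed.preimage ?_ isClosed_singleton)
    unfold extSurv
    fun_prop
  have hmem := hQclosed.csSup_mem hQne hQbdd
  have : invSnd ρ x = sSup Q := rfl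
  rw [this]
  exact ⟨hmem.1, hmem.2⟩

/-- Galois (a): if `x` is strictly below the tail at `t`, the quantile exceeds `t`. -/
lemma lt_invFst (hpos : ρ (Iic 0) = 0) (hx0 : 0 < x)
    (hxc : x < (ρ (Ioi t)).toReal) : t < invFst ρ x := by
  have hx1 : x < 1 := lt_of_lt_of_le hxc (toReal_le_one _)
  obtain ⟨b, hbpos, hbmem, hbtail⟩ := exists_bpoint hpos hx0 hx1
  have hbt : t < b := by
    by_contra hle
    push_neg at hle
    have h1 : ρ (Ioi t) ≤ ρ (Ioi b) := measure_mono (Ioi_subset_Ioi hle)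
    have h2 : (ρ (Ioi t)).toReal ≤ x :=
      ENNReal.toReal_le_of_le_ofReal hx0.le (h1.trans hbtail)
    linarith
  exact lt_of_lt_of_le hbt (le_csSup (bddAbove_Ach hx0) hbmem)

/-- Galois (b): if the quantile exceeds `t`, then `x` is below the tail at `t`. -/
lemma le_of_lt_invFst (hpos : ρ (Iic 0) = 0) (hx0 : 0 < x) (hx1 : x < 1)
    (ht : t < invFst ρ x) : x ≤ (ρ (Ioi t)).toReal := by
  obtain ⟨w, hwmem, hw⟩ := exists_lt_of_lt_csSup (Ach_nonempty hpos hx0 hx1) ht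
  obtain ⟨q, hq, hqe⟩ := hwmem
  calc x = extSurv ρ w q := hqe.symm
  _ ≤ (ρ (Ici w)).toReal := extSurv_le_Ici hq.1
  _ ≤ (ρ (Ioi t)).toReal :=
      ENNReal.toReal_mono (measure_ne_top _ _) (measure_mono (Ici_subset_Ioi.2 hw))

/-- the quantile is antitone -/
lemma invFst_le_invFst (hpos : ρ (Iic 0) = 0) {x x' : ℝ} (hx0 : 0 < x) (hxx : x < x')
    (hx1 : x' < 1) : invFst ρ x' ≤ invFst ρ x := by
  have hx1' : x < 1 := hxx.trans hx1
  obtain ⟨hYpos, hQmem, hQeq⟩ := attain hpos hx0 hx1'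
  refine csSup_le (Ach_nonempty hpos (hx0.trans hxx) hx1) fun w hw => ?_
  by_contra hgt
  push_neg at hgt
  obtain ⟨q, hq, hqe⟩ := hw
  have h1 : x' ≤ (ρ (Ici w)).toReal := by rw [← hqe]; exact extSurv_le_Ici hq.1
  have h2 : (ρ (Ici w)).toReal ≤ (ρ (Ioi (invFst ρ x))).toReal :=
    ENNReal.toReal_mono (measure_ne_top _ _) (measure_mono (Ici_subset_Ioi.2 hgt))
  have h3 : (ρ (Ioi (invFst ρ x))).toReal ≤ x :=
    le_trans (Ioi_le_extSurv hQmem.2) (le_of_eq hQeq)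
  linarith
section SizeBiasedFacts

variable {ν : Measure ℝ} [IsProbabilityMeasure ν] {m : ℝ}

lemma density_measurable (m : ℝ) : Measurable fun t : ℝ => ENNReal.ofReal (t / m) :=
  ENNReal.measurable_ofReal.comp (measurable_id.div_const m)

lemma ae_pos (hpos : ν (Iic 0) = 0) : ∀ᵐ t ∂ν, 0 < t := by
  rw [ae_iff]
  convert hpos using 2
  ext t
  simp

lemma mean_pos (hpos : ν (Iic 0) = 0) (hint : Integrable id ν) (hm : ∫ x, x ∂ν = m) :
    0 < m := by
  have hae := ae_pos hpos
  have h0 : 0 ≤ m := by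
    rw [← hm]
    exact integral_nonneg_of_ae (hae.mono fun t ht => ht.le)
  rcases eq_or_lt_of_le h0 with hz | hp
  · exfalso
    have hid : ∫ x, id x ∂ν = 0 := by simpa [id] using hm.trans hz.symm
    have := (integral_eq_zero_iff_of_nonneg_ae (hae.mono fun t ht => ht.le) hint).1 hid
    have hcon : ∀ᵐ t ∂ν, (0:ℝ) < t ∧ id t = 0 := hae.and this
    obtain ⟨t, ht1, ht2⟩ := hcon.exists
    simp only [id] at ht2
    linarith
  · exact hp

lemma sizeBiased_univ (hpos : ν (Iic 0) = 0) (hint : Integrable id ν)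
    (hm : ∫ x, x ∂ν = m) : sizeBiased ν m univ = 1 := by
  have hm0 := mean_pos hpos hint hm
  rw [sizeBiased, withDensity_apply _ MeasurableSet.univ, Measure.restrict_univ]
  have hint' : Integrable (fun t : ℝ => t / m) ν := hint.div_const m
  rw [← ofReal_integral_eq_lintegral_ofReal hint'
    ((ae_pos hpos).mono fun t ht => div_nonneg ht.le hm0.le)]
  have : ∫ t, t / m ∂ν = 1 := by
    rw [integral_div]
    rw [show (∫ t : ℝ, t ∂ν) = m from hm, div_self hm0.ne']
  rw [this, ENNReal.ofReal_one]

lemma sizeBiased_isProb (hpos : ν (Iic 0) = 0) (hint : Integrable id ν)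
    (hm : ∫ x, x ∂ν = m) : IsProbabilityMeasure (sizeBiased ν m) :=
  ⟨sizeBiased_univ hpos hint hm⟩

lemma sizeBiased_Iic (hpos : ν (Iic 0) = 0) : sizeBiased ν m (Iic 0) = 0 := by
  rw [sizeBiased, withDensity_apply _ measurableSet_Iic]
  exact setLIntegral_measure_zero _ _ hpos

lemma sizeBiased_singleton (y : ℝ) :
    sizeBiased ν m {y} = ENNReal.ofReal (y / m) * ν {y} := by
  rw [sizeBiased, withDensity_apply _ (measurableSet_singleton y), lintegral_singleton]

lemma sizeBiased_Ioo_ge {y y' : ℝ} (hm0 : 0 < m) :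
    ENNReal.ofReal (y / m) * ν (Ioo y y') ≤ sizeBiased ν m (Ioo y y') := by
  rw [sizeBiased, withDensity_apply _ measurableSet_Ioo, ← setLIntegral_const]
  refine setLIntegral_mono (density_measurable m) fun t ht => ?_
  refine ENNReal.ofReal_le_ofReal ?_
  gcongr
  exact ht.1.le

lemma sizeBiased_Ioo_le {y y' : ℝ} (hm0 : 0 < m) :
    sizeBiased ν m (Ioo y y') ≤ ENNReal.ofReal (y' / m) * ν (Ioo y y') := by
  rw [sizeBiased, withDensity_apply _ measurableSet_Ioo, ← setLIntegral_const]
  refine setLIntegral_mono measurable_const fun t ht => ?_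
  exact ENNReal.ofReal_le_ofReal (by gcongr; exact ht.2.le)

end SizeBiasedFacts
lemma tail_split (μ : Measure ℝ) [IsFiniteMeasure μ] {y y' : ℝ} (h : y < y') :
    (μ (Ioi y)).toReal =
      (μ (Ioo y y')).toReal + (μ {y'}).toReal + (μ (Ioi y')).toReal := by
  have hset : Ioi y = Ioo y y' ∪ ({y'} ∪ Ioi y') := by
    ext t
    simp only [mem_Ioi, mem_union, mem_Ioo, mem_singleton_iff]
    constructor
    · intro ht
      rcases lt_trichotomy t y' with h1 | h1 | h1
      · exact Or.inl ⟨ht, h1⟩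
      · exact Or.inr (Or.inl h1)
      · exact Or.inr (Or.inr h1)
    · rintro (⟨h1, _⟩ | rfl | h1) <;> linarith
  have hd1 : Disjoint ({y'} : Set ℝ) (Ioi y') := by
    simp only [Set.disjoint_left, mem_singleton_iff, mem_Ioi]
    rintro t rfl
    exact lt_irrefl t
  have hd2 : Disjoint (Ioo y y') ({y'} ∪ Ioi y') := by
    simp only [Set.disjoint_left, mem_Ioo, mem_union, mem_singleton_iff, mem_Ioi]
    rintro t ⟨_, h2⟩ (rfl | h3) <;> linarith
  have h1 : μ ({y'} ∪ Ioi y') = μ {y'} + μ (Ioi y') :=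
    measure_union hd1 measurableSet_Ioi
  have h2 : μ (Ioi y) = μ (Ioo y y') + μ ({y'} ∪ Ioi y') := by
    rw [hset]
    exact measure_union hd2 ((measurableSet_singleton y').union measurableSet_Ioi)
  rw [h2, h1, ENNReal.toReal_add (measure_ne_top _ _)
      (ENNReal.add_ne_top.2 ⟨measure_ne_top _ _, measure_ne_top _ _⟩),
    ENNReal.toReal_add (measure_ne_top _ _) (measure_ne_top _ _)]
  ring

lemma slope_core {ν ρ : Measure ℝ} [IsProbabilityMeasure ν] [IsProbabilityMeasure ρ]
    {m y y' q q' x x' : ℝ}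
    (hρ : ρ = sizeBiased ν m) (hm0 : 0 < m)
    (hy0 : 0 < y) (hyy : y ≤ y') (hq : q ∈ Set.Icc (0:ℝ) 1) (hq' : q' ∈ Set.Icc (0:ℝ) 1)
    (hxe : extSurv ρ y q = x') (hxe' : extSurv ρ y' q' = x) (hxx : x < x') :
    y * (extSurv ν y q - extSurv ν y' q') ≤ m * (x' - x) ∧
      m * (x' - x) ≤ y' * (extSurv ν y q - extSurv ν y' q') := by
  have hy'0 : 0 < y' := lt_of_lt_of_le hy0 hyy
  obtain ⟨hq0, hq1⟩ := hq
  obtain ⟨hq'0, hq'1⟩ := hq'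
  rcases eq_or_lt_of_le hyy with heq | hlt
  · -- same first coordinate
    subst heq
    have hmA : m * (ρ {y}).toReal = y * (ν {y}).toReal := by
      rw [hρ, sizeBiased_singleton, ENNReal.toReal_mul,
        ENNReal.toReal_ofReal (div_nonneg hy0.le hm0.le)]
      field_simp
    simp only [extSurv] at hxe hxe' ⊢
    have key : m * (x' - x) = y * (((ν (Ioi y)).toReal + (1 - q) * (ν {y}).toReal) -
        ((ν (Ioi y)).toReal + (1 - q') * (ν {y}).toReal)) := by
      linear_combination (-m) * hxe + m * hxe' + (q' - q) * hmA
    exact ⟨le_of_eq key.symm, le_of_eq key⟩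
  · -- y < y'
    have hsplitν := tail_split ν hlt
    have hsplitρ := tail_split ρ hlt
    simp only [extSurv] at hxe hxe' ⊢
    set Tν := (ν (Ioi y)).toReal with hTν
    set Tν' := (ν (Ioi y')).toReal with hTν'
    set Aν := (ν {y}).toReal with hAν
    set Bν := (ν {y'}).toReal with hBν
    set Pν := (ν (Ioo y y')).toReal with hPν
    set Tρ := (ρ (Ioi y)).toReal with hTρ
    set Tρ' := (ρ (Ioi y')).toReal with hTρ'
    set Aρ := (ρ {y}).toReal with hAρ
    set Bρ := (ρ {y'}).toReal with hBρ
    set Pρ := (ρ (Ioo y y')).toReal with hPρ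
    have hmA : m * Aρ = y * Aν := by
      rw [hAρ, hAν, hρ, sizeBiased_singleton, ENNReal.toReal_mul,
        ENNReal.toReal_ofReal (div_nonneg hy0.le hm0.le)]
      field_simp
    have hmB : m * Bρ = y' * Bν := by
      rw [hBρ, hBν, hρ, sizeBiased_singleton, ENNReal.toReal_mul,
        ENNReal.toReal_ofReal (div_nonneg hy'0.le hm0.le)]
      field_simp
    have hPν0 : 0 ≤ Pν := ENNReal.toReal_nonneg
    have hAν0 : 0 ≤ Aν := ENNReal.toReal_nonneg
    have hBν0 : 0 ≤ Bν := ENNReal.toReal_nonneg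
    have hPlow : y * Pν ≤ m * Pρ := by
      have h1 : ENNReal.ofReal (y / m) * ν (Ioo y y') ≤ ρ (Ioo y y') := by
        rw [hρ]; exact sizeBiased_Ioo_ge hm0
      have h2 : y / m * Pν ≤ Pρ := by
        have h3 := ENNReal.toReal_mono (measure_ne_top _ _) h1
        rwa [ENNReal.toReal_mul, ENNReal.toReal_ofReal (div_nonneg hy0.le hm0.le),
          ← hPν, ← hPρ] at h3
      have h4 := mul_le_mul_of_nonneg_left h2 hm0.le
      have h5 : m * (y / m * Pν) = y * Pν := by field_simp
      linarith
    have hPhigh : m * Pρ ≤ y' * Pν := by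
      have h1 : ρ (Ioo y y') ≤ ENNReal.ofReal (y' / m) * ν (Ioo y y') := by
        rw [hρ]; exact sizeBiased_Ioo_le hm0
      have h2 : Pρ ≤ y' / m * Pν := by
        have h3 := ENNReal.toReal_mono
          (ENNReal.mul_ne_top ENNReal.ofReal_ne_top (measure_ne_top _ _)) h1
        rwa [ENNReal.toReal_mul, ENNReal.toReal_ofReal (div_nonneg hy'0.le hm0.le),
          ← hPν, ← hPρ] at h3
      have h4 := mul_le_mul_of_nonneg_left h2 hm0.le
      have h5 : m * (y' / m * Pν) = y' * Pν := by field_simp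
      linarith
    have g1 : m * (x' - x) = m * Pρ + (1 - q) * (y * Aν) + q' * (y' * Bν) := by
      linear_combination (-m) * hxe + m * hxe' + m * hsplitρ + (1 - q) * hmA + q' * hmB
    have g2 : y * (Tν + (1 - q) * Aν - (Tν' + (1 - q') * Bν)) =
        y * Pν + (1 - q) * (y * Aν) + q' * (y * Bν) := by
      linear_combination y * hsplitν
    have g3 : y' * (Tν + (1 - q) * Aν - (Tν' + (1 - q') * Bν)) =
        y' * Pν + (1 - q) * (y' * Aν) + q' * (y' * Bν) := by
      linear_combination y' * hsplitν
    have hint1 : 0 ≤ q' * Bν * (y' - y) :=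
      mul_nonneg (mul_nonneg hq'0 hBν0) (sub_nonneg.2 hyy)
    have hint2 : 0 ≤ (1 - q) * Aν * (y' - y) :=
      mul_nonneg (mul_nonneg (by linarith) hAν0) (sub_nonneg.2 hyy)
    constructor
    · rw [g2, g1]
      linarith [hint1, hPlow]
    · rw [g3, g1]
      linarith [hint2, hPhigh]

lemma slope_bounds {ν : Measure ℝ} [IsProbabilityMeasure ν] (hpos : ν (Iic 0) = 0)
    (hint : Integrable id ν) {m : ℝ} (hm : ∫ t, t ∂ν = m) {x x' : ℝ}
    (hx0 : 0 < x) (hxx : x < x') (hx1 : x' < 1) :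
    invFst (sizeBiased ν m) x' * (sbRatio ν m x' - sbRatio ν m x) ≤ m * (x' - x) ∧
      m * (x' - x) ≤ invFst (sizeBiased ν m) x * (sbRatio ν m x' - sbRatio ν m x) := by
  haveI hPM : IsProbabilityMeasure (sizeBiased ν m) := sizeBiased_isProb hpos hint hm
  have hρpos : sizeBiased ν m (Iic 0) = 0 := sizeBiased_Iic hpos
  have hm0 : 0 < m := mean_pos hpos hint hm
  obtain ⟨h1a, h1b, h1c⟩ := attain (ρ := sizeBiased ν m) hρpos (hx0.trans hxx) hx1
  obtain ⟨h2a, h2b, h2c⟩ := attain (ρ := sizeBiased ν m) hρpos hx0 (hxx.trans hx1)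
  have hyy : invFst (sizeBiased ν m) x' ≤ invFst (sizeBiased ν m) x :=
    invFst_le_invFst hρpos hx0 hxx hx1
  exact slope_core rfl hm0 h1a hyy h1b h2b h1c h2c hxx
lemma interlace (ν₁ ν₂ : Measure ℝ) [IsProbabilityMeasure ν₁] [IsProbabilityMeasure ν₂]
    (hpos₁ : ν₁ (Iic 0) = 0) (hpos₂ : ν₂ (Iic 0) = 0)
    (hint₁ : Integrable id ν₁) (hint₂ : Integrable id ν₂)
    (m : ℝ) (hm₁ : ∫ t, t ∂ν₁ = m) (hm₂ : ∫ t, t ∂ν₂ = m)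
    (hr : ∀ x ∈ Set.Icc (0:ℝ) 1, sbRatio ν₁ m x = sbRatio ν₂ m x)
    {x x' : ℝ} (hx0 : 0 < x) (hxx : x < x') (hx1 : x' < 1) :
    invFst (sizeBiased ν₂ m) x' ≤ invFst (sizeBiased ν₁ m) x := by
  have hm0 := mean_pos hpos₁ hint₁ hm₁
  obtain ⟨h1u, h1l⟩ := slope_bounds hpos₁ hint₁ hm₁ hx0 hxx hx1
  obtain ⟨h2u, h2l⟩ := slope_bounds hpos₂ hint₂ hm₂ hx0 hxx hx1
  have hre : sbRatio ν₂ m x' - sbRatio ν₂ m x = sbRatio ν₁ m x' - sbRatio ν₁ m x := by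
    rw [hr x ⟨hx0.le, by linarith⟩, hr x' ⟨by linarith, hx1.le⟩]
  rw [hre] at h2u
  haveI := sizeBiased_isProb hpos₁ hint₁ hm₁
  have hI1pos : 0 < invFst (sizeBiased ν₁ m) x :=
    (attain (sizeBiased_Iic hpos₁) hx0 (hxx.trans hx1)).1
  have hmx : 0 < m * (x' - x) := mul_pos hm0 (by linarith)
  have hΔpos : 0 < sbRatio ν₁ m x' - sbRatio ν₁ m x := by
    by_contra hle
    push_neg at hle
    have h0 : invFst (sizeBiased ν₁ m) x * (sbRatio ν₁ m x' - sbRatio ν₁ m x) ≤ 0 :=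
      mul_nonpos_of_nonneg_of_nonpos hI1pos.le hle
    linarith
  exact le_of_mul_le_mul_right (h2u.trans h1l) hΔpos

lemma tail_toReal_le (ν₁ ν₂ : Measure ℝ) [IsProbabilityMeasure ν₁] [IsProbabilityMeasure ν₂]
    (hpos₁ : ν₁ (Iic 0) = 0) (hpos₂ : ν₂ (Iic 0) = 0)
    (hint₁ : Integrable id ν₁) (hint₂ : Integrable id ν₂)
    (m : ℝ) (hm₁ : ∫ t, t ∂ν₁ = m) (hm₂ : ∫ t, t ∂ν₂ = m)
    (hr : ∀ x ∈ Set.Icc (0:ℝ) 1, sbRatio ν₁ m x = sbRatio ν₂ m x)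
    {t : ℝ} (ht : 0 < t) :
    (sizeBiased ν₂ m (Ioi t)).toReal ≤ (sizeBiased ν₁ m (Ioi t)).toReal := by
  haveI := sizeBiased_isProb hpos₁ hint₁ hm₁
  haveI := sizeBiased_isProb hpos₂ hint₂ hm₂
  set c₁ := (sizeBiased ν₁ m (Ioi t)).toReal with hc₁
  set c₂ := (sizeBiased ν₂ m (Ioi t)).toReal with hc₂
  by_contra hlt
  push_neg at hlt
  have hc₁0 : 0 ≤ c₁ := ENNReal.toReal_nonneg
  have hc₂1 : c₂ ≤ 1 := toReal_le_one _
  set x := c₁ + (c₂ - c₁) / 3 with hx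
  set x' := c₁ + 2 * (c₂ - c₁) / 3 with hx'
  have hx0 : 0 < x := by rw [hx]; linarith
  have hxx : x < x' := by rw [hx, hx']; linarith
  have hx'c : x' < c₂ := by rw [hx']; linarith
  have hx'1 : x' < 1 := lt_of_lt_of_le hx'c hc₂1
  have hI2 : t < invFst (sizeBiased ν₂ m) x' :=
    lt_invFst (sizeBiased_Iic hpos₂) (hx0.trans hxx) hx'c
  have hI1 : invFst (sizeBiased ν₁ m) x ≤ t := by
    by_contra hgt
    push_neg at hgt
    have := le_of_lt_invFst (sizeBiased_Iic hpos₁) hx0 (hxx.trans hx'1) hgt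
    rw [← hc₁] at this
    have : x ≤ c₁ := this
    rw [hx] at this
    linarith
  have := interlace ν₁ ν₂ hpos₁ hpos₂ hint₁ hint₂ m hm₁ hm₂ hr hx0 hxx hx'1
  linarith
lemma sizeBiased_recover (ν : Measure ℝ) [IsProbabilityMeasure ν] {m : ℝ} (hm0 : 0 < m)
    (hpos : ν (Iic 0) = 0) :
    (sizeBiased ν m).withDensity (fun t => ENNReal.ofReal (m / t)) = ν := by
  have hg : Measurable fun t : ℝ => ENNReal.ofReal (m / t) :=
    ENNReal.measurable_ofReal.comp (measurable_const.div measurable_id)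
  rw [sizeBiased, ← withDensity_mul _ (density_measurable m) hg]
  have hae : ((fun y : ℝ => ENNReal.ofReal (y / m)) * fun t : ℝ => ENNReal.ofReal (m / t))
      =ᵐ[ν] (1 : ℝ → ℝ≥0∞) := by
    filter_upwards [ae_pos hpos] with t ht
    simp only [Pi.mul_apply, Pi.one_apply]
    rw [← ENNReal.ofReal_mul (div_nonneg ht.le hm0.le)]
    rw [show t / m * (m / t) = 1 by field_simp]
    exact ENNReal.ofReal_one
  rw [withDensity_congr_ae hae, withDensity_one]

end SBR

/-- If two probability measures on `(0, ∞)` have the same finite first moment and the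
same size-bias ratio function on `[0, 1]`, then they are equal. -/
theorem sbRatio_determines_measure (ν₁ ν₂ : Measure ℝ)
    [IsProbabilityMeasure ν₁] [IsProbabilityMeasure ν₂]
    (hpos₁ : ν₁ (Set.Iic 0) = 0) (hpos₂ : ν₂ (Set.Iic 0) = 0)
    (hint₁ : Integrable id ν₁) (hint₂ : Integrable id ν₂)
    (m : ℝ) (hm₁ : ∫ x, x ∂ν₁ = m) (hm₂ : ∫ x, x ∂ν₂ = m)
    (hr : ∀ x ∈ Set.Icc (0 : ℝ) 1, sbRatio ν₁ m x = sbRatio ν₂ m x) :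
    ν₁ = ν₂ := by
  have hm0 : 0 < m := SBR.mean_pos hpos₁ hint₁ hm₁
  haveI hP1 : IsProbabilityMeasure (sizeBiased ν₁ m) := SBR.sizeBiased_isProb hpos₁ hint₁ hm₁
  haveI hP2 : IsProbabilityMeasure (sizeBiased ν₂ m) := SBR.sizeBiased_isProb hpos₂ hint₂ hm₂
  have hr' : ∀ x ∈ Set.Icc (0 : ℝ) 1, sbRatio ν₂ m x = sbRatio ν₁ m x :=
    fun x hx => (hr x hx).symm
  have htail : ∀ t : ℝ, sizeBiased ν₁ m (Set.Ioi t) = sizeBiased ν₂ m (Set.Ioi t) := by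
    intro t
    rcases le_or_gt t 0 with ht | ht
    · have e1 : sizeBiased ν₁ m (Set.Ioi t) = 1 := by
        have h1 : (1 : ℝ≥0∞) ≤ sizeBiased ν₁ m (Set.Ioi t) := by
          rw [← SBR.Ioi_zero_eq_one (ρ := sizeBiased ν₁ m) (SBR.sizeBiased_Iic hpos₁)]
          exact measure_mono (Set.Ioi_subset_Ioi ht)
        exact le_antisymm prob_le_one h1
      have e2 : sizeBiased ν₂ m (Set.Ioi t) = 1 := by
        have h1 : (1 : ℝ≥0∞) ≤ sizeBiased ν₂ m (Set.Ioi t) := by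
          rw [← SBR.Ioi_zero_eq_one (ρ := sizeBiased ν₂ m) (SBR.sizeBiased_Iic hpos₂)]
          exact measure_mono (Set.Ioi_subset_Ioi ht)
        exact le_antisymm prob_le_one h1
      rw [e1, e2]
    · have h12 := SBR.tail_toReal_le ν₁ ν₂ hpos₁ hpos₂ hint₁ hint₂ m hm₁ hm₂ hr (t := t) ht
      have h21 := SBR.tail_toReal_le ν₂ ν₁ hpos₂ hpos₁ hint₂ hint₁ m hm₂ hm₁ hr' (t := t) ht
      exact (ENNReal.toReal_eq_toReal_iff' (measure_ne_top _ _) (measure_ne_top _ _)).1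
        (le_antisymm h21 h12)
  have hSB : sizeBiased ν₁ m = sizeBiased ν₂ m := by
    refine MeasureTheory.Measure.ext_of_Iic (sizeBiased ν₁ m) (sizeBiased ν₂ m) fun a => ?_
    have c1 : sizeBiased ν₁ m (Set.Iic a) = 1 - sizeBiased ν₁ m (Set.Ioi a) := by
      rw [← Set.compl_Ioi, measure_compl measurableSet_Ioi (measure_ne_top _ _), measure_univ]
    have c2 : sizeBiased ν₂ m (Set.Iic a) = 1 - sizeBiased ν₂ m (Set.Ioi a) := by
      rw [← Set.compl_Ioi, measure_compl measurableSet_Ioi (measure_ne_top _ _), measure_univ]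
    rw [c1, c2, htail a]
  calc ν₁ = (sizeBiased ν₁ m).withDensity (fun t => ENNReal.ofReal (m / t)) :=
        (SBR.sizeBiased_recover ν₁ hm0 hpos₁).symm
    _ = (sizeBiased ν₂ m).withDensity (fun t => ENNReal.ofReal (m / t)) := by rw [hSB]
    _ = ν₂ := SBR.sizeBiased_recover ν₂ hm0 hpos₂
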